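/- Let d > 0, c, m ∈ ℝ with m > c, m(d-1)+2c > 0, and g(d) > 0, where g(d) = md³ + (cm²-m³+2c+m)d² + (2mc²-2cm²+4c-m)d + c³-mc²+2c-m. Then the equation -(1+d)⁴a² + 2(1+d)²(c-m)(c+md)a + (m-c)g(d) = 0 has a positive root a* = ((c-m)(md+c) + (1+d)√((m-c)(md+2c-m)))/(1+d)², and for a > a* the quadratic is negative, while for 0 < a < a* it is positive. -/

import Mathlib

theorem hopf_threshold
    (c d m : ℝ) (hd : 0 < d) (hmc : c < m)
    (hcond : 0 < m * (d - 1) + 2 * c)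
    (g : ℝ)
    (hg : g = m * d ^ 3 + (c * m ^ 2 - m ^ 3 + 2 * c + m) * d ^ 2 +
        (2 * m * c ^ 2 - 2 * c * m ^ 2 + 4 * c - m) * d + c ^ 3 - m * c ^ 2 + 2 * c - m)
    (hgpos : 0 < g)
    (astar : ℝ)
    (hastar : astar = ((c - m) * (m * d + c) +
        (1 + d) * Real.sqrt ((m - c) * (m * d + 2 * c - m))) / (1 + d) ^ 2) :
    0 < astar ∧
    -(1 + d) ^ 4 * astar ^ 2 + 2 * (1 + d) ^ 2 * (c - m) * (c + m * d) * astar + (m - c) * g = 0 ∧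
    (∀ a : ℝ, astar < a →
      -(1 + d) ^ 4 * a ^ 2 + 2 * (1 + d) ^ 2 * (c - m) * (c + m * d) * a + (m - c) * g < 0) ∧
    (∀ a : ℝ, 0 < a → a < astar →
      0 < -(1 + d) ^ 4 * a ^ 2 + 2 * (1 + d) ^ 2 * (c - m) * (c + m * d) * a + (m - c) * g) := by
  have h1d : (0:ℝ) < 1 + d := by linarith
  have h1d2 : (0:ℝ) < (1 + d) ^ 2 := by positivity
  set s : ℝ := Real.sqrt ((m - c) * (m * d + 2 * c - m)) with hs
  have hs0 : 0 ≤ s := Real.sqrt_nonneg _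
  have hs2 : s ^ 2 = (m - c) * (m * d + 2 * c - m) := by
    rw [hs, Real.sq_sqrt]; nlinarith
  -- key identity : (m-c)*g = (1+d)^2 * s^2 - ((c-m)*(m*d+c))^2
  have hkey : (m - c) * g = (1 + d) ^ 2 * s ^ 2 - ((c - m) * (m * d + c)) ^ 2 := by
    rw [hs2, hg]; ring
  -- numerator positivity
  have hnum : 0 < (c - m) * (m * d + c) + (1 + d) * s := by
    nlinarith [mul_pos h1d2 hgpos, mul_nonneg (le_of_lt h1d) hs0,
      sq_nonneg ((c - m) * (m * d + c) + (1 + d) * s)]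
  have hapos : 0 < astar := by
    rw [hastar]; exact div_pos hnum h1d2
  set am : ℝ := ((c - m) * (m * d + c) - (1 + d) * s) / (1 + d) ^ 2 with ham
  have hamneg : am < 0 := by
    rw [ham]
    apply div_neg_of_neg_of_pos _ h1d2
    nlinarith [mul_pos h1d2 hgpos, mul_nonneg (le_of_lt h1d) hs0]
  have hfact : ∀ a : ℝ,
      -(1 + d) ^ 4 * a ^ 2 + 2 * (1 + d) ^ 2 * (c - m) * (c + m * d) * a + (m - c) * g
        = -(1 + d) ^ 4 * (a - astar) * (a - am) := by
    intro a
    rw [hastar, ham, hg]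
    field_simp
    linear_combination (-(1+d)^2) * hs2
  refine ⟨hapos, ?_, ?_, ?_⟩
  · rw [hfact astar]; ring
  · intro a ha
    rw [hfact a]
    have h1 : 0 < a - astar := by linarith
    have h2 : 0 < a - am := by linarith
    nlinarith [mul_pos (mul_pos (pow_pos h1d 4) h1) h2]
  · intro a ha0 ha
    rw [hfact a]
    have h1 : 0 < astar - a := by linarith
    have h2 : 0 < a - am := by linarith
    nlinarith [mul_pos (mul_pos (pow_pos h1d 4) h1) h2]
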